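/- Let (Ω, P) be a probability space, let θ : Ω → ℝ be a Rademacher random variable (P(θ = 1) = P(θ = −1) = 1/2), and let M : Ω → ℝ^{d×d} be a random symmetric matrix with operator norm ‖M(ω)‖ ≤ L almost surely (L > 0), independent of θ. Then for every c ∈ ℝ, the matrix exp(c²L²/2)·I_d − E[exp(c·θ·M)] is positive semidefinite, where exp(c·θ(ω)·M(ω)) denotes the matrix exponential and the expectation is taken entrywise; i.e. θM is a sub-Gaussian random matrix with matrix parameter L²·I_d. -/

import Mathlib

open MeasureTheory
open scoped RealInnerProductSpace

section AuxSG

set_option maxHeartbeats 1000000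
set_option synthInstance.maxHeartbeats 200000

variable {d : ℕ}

local notation "E" => EuclideanSpace ℝ (Fin d)

private lemma sg_pow_apply_le (A : E →L[ℝ] E) {L : ℝ} (hA : ‖A‖ ≤ L) (n : ℕ)
    (u : E) : ‖(A ^ n) u‖ ≤ L ^ n * ‖u‖ := by
  have hL0 : 0 ≤ L := le_trans (norm_nonneg A) hA
  induction n generalizing u with
  | zero => simp
  | succ n ih =>
    have h0 : (A ^ (n + 1)) u = (A ^ n) (A u) := by
      rw [pow_succ]; rfl
    rw [h0]
    calc ‖(A ^ n) (A u)‖ ≤ L ^ n * ‖A u‖ := ih (A u)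
      _ ≤ L ^ n * (L * ‖u‖) := by
          have h1 : ‖A u‖ ≤ ‖A‖ * ‖u‖ := A.le_opNorm u
          have h2 : ‖A‖ * ‖u‖ ≤ L * ‖u‖ := by gcongr
          exact mul_le_mul_of_nonneg_left (h1.trans h2) (pow_nonneg hL0 n)
      _ = L ^ (n + 1) * ‖u‖ := by ring

private lemma sg_real_exp_hasSum (x : ℝ) :
    HasSum (fun n : ℕ => (n.factorial : ℝ)⁻¹ * x ^ n) (Real.exp x) := by
  have := NormedSpace.exp_series_hasSum_exp' (𝕂 := ℝ) (𝔸 := ℝ) x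
  rw [← Real.exp_eq_exp_ℝ] at this
  simpa [smul_eq_mul] using this

private lemma sg_key (A : E →L[ℝ] E) (c L : ℝ) (hA : ‖A‖ ≤ L) (u : E) :
    ⟪u, NormedSpace.exp (c • A) u⟫ + ⟪u, NormedSpace.exp ((-c) • A) u⟫
      ≤ 2 * Real.exp (c ^ 2 * L ^ 2 / 2) * ‖u‖ ^ 2 := by
  set φ : (E →L[ℝ] E) →L[ℝ] ℝ :=
    (innerSL ℝ u).comp (ContinuousLinearMap.apply ℝ E u) with hφ
  have hφ_apply : ∀ T : E →L[ℝ] E, φ T = ⟪u, T u⟫ := fun T => rfl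
  have hsum : ∀ t : ℝ, HasSum
      (fun n : ℕ => (n.factorial : ℝ)⁻¹ * t ^ n * ⟪u, (A ^ n) u⟫)
      ⟪u, (NormedSpace.exp (t • A)) u⟫ := by
    intro t
    have h := (NormedSpace.exp_series_hasSum_exp' (𝕂 := ℝ) (t • A)).mapL φ
    rw [hφ_apply] at h
    have hpow : ∀ (s : ℝ) (n : ℕ) (v : E), ((s • A) ^ n) v = s ^ n • (A ^ n) v := by
      intro s n
      induction n with
      | zero => intro v; simp
      | succ n ih =>
        intro v
        have e1 : ((s • A) ^ (n + 1)) v = ((s • A) ^ n) ((s • A) v) := by rw [pow_succ]; rfl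
        have e2 : (A ^ (n + 1)) v = (A ^ n) (A v) := by rw [pow_succ]; rfl
        rw [e1, e2, ContinuousLinearMap.smul_apply, ContinuousLinearMap.map_smul, ih (A v), smul_smul, ← pow_succ']
    convert h using 2 with n
    rw [hφ_apply]
    simp only [ContinuousLinearMap.smul_apply, inner_smul_right, smul_eq_mul, hpow t n u]
    ring
  have hadd := (hsum c).add (hsum (-c))
  have hg : HasSum
      (fun n : ℕ => ((n.factorial : ℝ)⁻¹ * (c * L) ^ n
        + (n.factorial : ℝ)⁻¹ * (-(c * L)) ^ n) * ‖u‖ ^ 2)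
      ((Real.exp (c * L) + Real.exp (-(c * L))) * ‖u‖ ^ 2) :=
    ((sg_real_exp_hasSum (c * L)).add (sg_real_exp_hasSum (-(c * L)))).mul_right _
  have hle : ⟪u, NormedSpace.exp (c • A) u⟫ + ⟪u, NormedSpace.exp ((-c) • A) u⟫
      ≤ (Real.exp (c * L) + Real.exp (-(c * L))) * ‖u‖ ^ 2 := by
    refine hasSum_le (fun n => ?_) hadd hg
    rcases Nat.even_or_odd n with he | ho
    · have hc : (-c) ^ n = c ^ n := he.neg_pow c
      have hcl : (-(c * L)) ^ n = (c * L) ^ n := he.neg_pow (c * L)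
      have hinner : ⟪u, (A ^ n) u⟫ ≤ L ^ n * ‖u‖ ^ 2 := by
        calc ⟪u, (A ^ n) u⟫ ≤ ‖u‖ * ‖(A ^ n) u‖ := real_inner_le_norm u _
          _ ≤ ‖u‖ * (L ^ n * ‖u‖) :=
              mul_le_mul_of_nonneg_left (sg_pow_apply_le A hA n u) (norm_nonneg u)
          _ = L ^ n * ‖u‖ ^ 2 := by ring
      have hcpow : (0 : ℝ) ≤ c ^ n := he.pow_nonneg c
      have hfact : (0 : ℝ) ≤ (n.factorial : ℝ)⁻¹ := by positivity
      rw [hc, hcl, mul_pow]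
      nlinarith [mul_le_mul_of_nonneg_left hinner (mul_nonneg hfact hcpow)]
    · rw [ho.neg_pow c, ho.neg_pow (c * L)]
      ring_nf
      try exact le_rfl
  have hcosh : Real.exp (c * L) + Real.exp (-(c * L)) ≤ 2 * Real.exp (c ^ 2 * L ^ 2 / 2) := by
    have h1 : Real.cosh (c * L) ≤ Real.exp ((c * L) ^ 2 / 2) := Real.cosh_le_exp_half_sq _
    rw [Real.cosh_eq] at h1
    have h2 : (c * L) ^ 2 = c ^ 2 * L ^ 2 := by ring
    rw [h2] at h1
    linarith
  calc ⟪u, NormedSpace.exp (c • A) u⟫ + ⟪u, NormedSpace.exp ((-c) • A) u⟫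
      ≤ (Real.exp (c * L) + Real.exp (-(c * L))) * ‖u‖ ^ 2 := hle
    _ ≤ 2 * Real.exp (c ^ 2 * L ^ 2 / 2) * ‖u‖ ^ 2 :=
        mul_le_mul_of_nonneg_right hcosh (by positivity)

private lemma sg_norm_exp_le (A : E →L[ℝ] E) :
    ‖NormedSpace.exp A‖ ≤ Real.exp ‖A‖ := by
  rw [NormedSpace.exp_eq_tsum (𝕂 := ℝ)]
  refine tsum_of_norm_bounded (sg_real_exp_hasSum ‖A‖) (fun n => ?_)
  have hpow : ‖A ^ n‖ ≤ ‖A‖ ^ n := by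
    refine ContinuousLinearMap.opNorm_le_bound _ (by positivity) (fun v => ?_)
    exact sg_pow_apply_le A le_rfl n v
  calc ‖(n.factorial : ℝ)⁻¹ • A ^ n‖ = (n.factorial : ℝ)⁻¹ * ‖A ^ n‖ := by
        rw [norm_smul ((n.factorial : ℝ)⁻¹) (A ^ n)]
        simp
    _ ≤ (n.factorial : ℝ)⁻¹ * ‖A‖ ^ n :=
        mul_le_mul_of_nonneg_left hpow (by positivity)

end AuxSG

section Main

set_option maxHeartbeats 1000000
set_option synthInstance.maxHeartbeats 400000

/-- A Rademacher variable times an independent bounded symmetric random matrix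
(formalized as a self-adjoint operator on `ℝ^d`) is a sub-Gaussian random matrix with
matrix parameter `L² I`: for every `c`, the operator
`exp(c² L² / 2) • I − E[exp(c θ M)]` is positive semidefinite. -/
theorem rademacher_times_bounded_matrix_subGaussian
    {d : ℕ} {Ω : Type*} [MeasurableSpace Ω] (P : Measure Ω) [IsProbabilityMeasure P]
    [MeasurableSpace (EuclideanSpace ℝ (Fin d) →L[ℝ] EuclideanSpace ℝ (Fin d))]
    [BorelSpace (EuclideanSpace ℝ (Fin d) →L[ℝ] EuclideanSpace ℝ (Fin d))]
    (θ : Ω → ℝ) (hθm : Measurable θ)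
    (hθ1 : P {ω | θ ω = 1} = 1 / 2) (hθ2 : P {ω | θ ω = -1} = 1 / 2)
    (M : Ω → EuclideanSpace ℝ (Fin d) →L[ℝ] EuclideanSpace ℝ (Fin d))
    (hMm : Measurable M)
    (hMsym : ∀ᵐ ω ∂P, IsSelfAdjoint (M ω))
    (L : ℝ) (hL : 0 < L) (hMb : ∀ᵐ ω ∂P, ‖M ω‖ ≤ L)
    (hind : ProbabilityTheory.IndepFun θ M P) :
    ∀ (c : ℝ) (u : EuclideanSpace ℝ (Fin d)),
      0 ≤ ⟪u, (Real.exp (c ^ 2 * L ^ 2 / 2) •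
            (1 : EuclideanSpace ℝ (Fin d) →L[ℝ] EuclideanSpace ℝ (Fin d)) -
          ∫ ω, NormedSpace.exp (c • θ ω • M ω) ∂P) u⟫ := by
  intro c u
  -- a.e. θ ∈ {1, -1}
  have hs1 : MeasurableSet {ω | θ ω = 1} := hθm (measurableSet_singleton 1)
  have hs2 : MeasurableSet {ω | θ ω = -1} := hθm (measurableSet_singleton (-1))
  have hdisj : Disjoint {ω | θ ω = 1} {ω | θ ω = -1} := by
    rw [Set.disjoint_left]
    intro ω h1 h2
    simp only [Set.mem_setOf_eq] at h1 h2
    rw [h1] at h2; norm_num at h2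
  have hunion : P ({ω | θ ω = 1} ∪ {ω | θ ω = -1}) = 1 := by
    rw [measure_union hdisj hs2, hθ1, hθ2, ENNReal.div_add_div_same]
    rw [one_add_one_eq_two]
    exact ENNReal.div_self two_ne_zero ENNReal.ofNat_ne_top
  have hθae : ∀ᵐ ω ∂P, θ ω = 1 ∨ θ ω = -1 := by
    have h := (prob_compl_eq_zero_iff (hs1.union hs2)).mpr hunion
    rw [ae_iff]
    have e : {ω | ¬(θ ω = 1 ∨ θ ω = -1)} = ({ω | θ ω = 1} ∪ {ω | θ ω = -1})ᶜ := by
      ext ω; simp [Set.mem_union, not_or]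
    rw [e]; exact h
  -- the evaluation functional
  set φ : (EuclideanSpace ℝ (Fin d) →L[ℝ] EuclideanSpace ℝ (Fin d)) →L[ℝ] ℝ :=
    (innerSL ℝ u).comp (ContinuousLinearMap.apply ℝ (EuclideanSpace ℝ (Fin d)) u) with hφ
  have hφ_apply : ∀ T : EuclideanSpace ℝ (Fin d) →L[ℝ] EuclideanSpace ℝ (Fin d),
      φ T = ⟪u, T u⟫ := fun T => rfl
  have hexp_cont : ∀ t : ℝ, Continuous fun T :
      (EuclideanSpace ℝ (Fin d) →L[ℝ] EuclideanSpace ℝ (Fin d)) => NormedSpace.exp (t • T) :=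
    fun t => (continuous_iff_continuousAt.2 fun x => (NormedSpace.exp_analytic (𝕂 := ℝ) x).continuousAt).comp (continuous_const_smul t)
  -- the integrand
  set F : Ω → (EuclideanSpace ℝ (Fin d) →L[ℝ] EuclideanSpace ℝ (Fin d)) :=
    fun ω => NormedSpace.exp (c • θ ω • M ω) with hF
  have h1 : Measurable fun ω => ((c * θ ω, M ω) :
      ℝ × (EuclideanSpace ℝ (Fin d) →L[ℝ] EuclideanSpace ℝ (Fin d))) :=
    (hθm.const_mul c).prodMk hMm
  have h2 : Measurable fun ω => (c * θ ω) • M ω := continuous_smul.measurable.comp h1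
  have hFmeas : Measurable F := by
    have e : F = fun ω => NormedSpace.exp ((c * θ ω) • M ω) := by
      funext ω
      show NormedSpace.exp (c • θ ω • M ω) = NormedSpace.exp ((c * θ ω) • M ω)
      rw [smul_smul]
    rw [e]
    exact (continuous_iff_continuousAt.2 fun x => (NormedSpace.exp_analytic (𝕂 := ℝ) x).continuousAt).measurable.comp h2
  have hFbound : ∀ᵐ ω ∂P, ‖F ω‖ ≤ Real.exp (|c| * L) := by
    filter_upwards [hθae, hMb] with ω hθω hMω
    have hnorm : ‖c • θ ω • M ω‖ ≤ |c| * L := by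
      rw [norm_smul c (θ ω • M ω), norm_smul (θ ω) (M ω)]
      have habs : ‖θ ω‖ = 1 := by
        rcases hθω with h | h <;> rw [h] <;> simp
      rw [habs, one_mul, Real.norm_eq_abs]
      exact mul_le_mul_of_nonneg_left hMω (abs_nonneg c)
    calc ‖F ω‖ ≤ Real.exp ‖c • θ ω • M ω‖ := sg_norm_exp_le _
      _ ≤ Real.exp (|c| * L) := Real.exp_le_exp.mpr hnorm
  have hFint : Integrable F P :=
    Integrable.mono' (integrable_const _) hFmeas.aestronglyMeasurable hFbound
  have hswap : ⟪u, (∫ ω, F ω ∂P) u⟫ = ∫ ω, ⟪u, F ω u⟫ ∂P := by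
    rw [← hφ_apply, ← φ.integral_comp_comm hFint]
    simp only [hφ_apply]
  -- scalar integrands
  set gp : Ω → ℝ := fun ω => ⟪u, (NormedSpace.exp (c • M ω)) u⟫ with hgp
  set gm : Ω → ℝ := fun ω => ⟪u, (NormedSpace.exp ((-c) • M ω)) u⟫ with hgm
  have hgmeas : ∀ t : ℝ,
      Measurable fun ω => ⟪u, (NormedSpace.exp (t • M ω)) u⟫ := by
    intro t
    have hc : Continuous fun T : (EuclideanSpace ℝ (Fin d) →L[ℝ] EuclideanSpace ℝ (Fin d)) =>
        φ (NormedSpace.exp (t • T)) := φ.continuous.comp (hexp_cont t)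
    exact hc.measurable.comp hMm
  have hgbound : ∀ t : ℝ, ∀ᵐ ω ∂P,
      ‖⟪u, (NormedSpace.exp (t • M ω)) u⟫‖ ≤ ‖u‖ * (Real.exp (|t| * L) * ‖u‖) := by
    intro t
    filter_upwards [hMb] with ω hMω
    have hn : ‖NormedSpace.exp (t • M ω)‖ ≤ Real.exp (|t| * L) := by
      calc ‖NormedSpace.exp (t • M ω)‖ ≤ Real.exp ‖t • M ω‖ := sg_norm_exp_le _
        _ ≤ Real.exp (|t| * L) := by
            apply Real.exp_le_exp.mpr
            rw [norm_smul t (M ω), Real.norm_eq_abs]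
            exact mul_le_mul_of_nonneg_left hMω (abs_nonneg t)
    calc ‖⟪u, (NormedSpace.exp (t • M ω)) u⟫‖
        ≤ ‖u‖ * ‖(NormedSpace.exp (t • M ω)) u‖ := by
          rw [Real.norm_eq_abs]; exact abs_real_inner_le_norm u _
      _ ≤ ‖u‖ * (Real.exp (|t| * L) * ‖u‖) := by
          apply mul_le_mul_of_nonneg_left _ (norm_nonneg u)
          calc ‖(NormedSpace.exp (t • M ω)) u‖
              ≤ ‖NormedSpace.exp (t • M ω)‖ * ‖u‖ := ContinuousLinearMap.le_opNorm _ u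
            _ ≤ Real.exp (|t| * L) * ‖u‖ :=
                mul_le_mul_of_nonneg_right hn (norm_nonneg u)
  have hgp_int : Integrable gp P :=
    Integrable.mono' (integrable_const _) (hgmeas c).aestronglyMeasurable (hgbound c)
  have hgm_int : Integrable gm P :=
    Integrable.mono' (integrable_const _) (hgmeas (-c)).aestronglyMeasurable (hgbound (-c))
  -- indicators
  set ψp : Ω → ℝ := Set.indicator {ω | θ ω = 1} (fun _ => (1:ℝ)) with hψp
  set ψm : Ω → ℝ := Set.indicator {ω | θ ω = -1} (fun _ => (1:ℝ)) with hψm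
  have hψp_meas : Measurable ψp := measurable_const.indicator hs1
  have hψm_meas : Measurable ψm := measurable_const.indicator hs2
  have hψp_int : Integrable ψp P := (integrable_const (1:ℝ)).indicator hs1
  have hψm_int : Integrable ψm P := (integrable_const (1:ℝ)).indicator hs2
  -- independence of the factors
  have hindp : ProbabilityTheory.IndepFun ψp gp P := by
    have hf : Measurable fun t : ℝ => Set.indicator ({1} : Set ℝ) (fun _ => (1:ℝ)) t :=
      measurable_const.indicator (measurableSet_singleton 1)
    have hg : Measurable fun T : (EuclideanSpace ℝ (Fin d) →L[ℝ] EuclideanSpace ℝ (Fin d)) =>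
        φ (NormedSpace.exp (c • T)) := (φ.continuous.comp (hexp_cont c)).measurable
    have h := hind.comp hf hg
    have e1 : ψp = (fun t : ℝ => Set.indicator ({1} : Set ℝ) (fun _ => (1:ℝ)) t) ∘ θ := by
      funext ω
      simp [hψp, Set.indicator_apply, Set.mem_setOf_eq, Set.mem_singleton_iff]
    have e2 : gp = (fun T => φ (NormedSpace.exp (c • T))) ∘ M := rfl
    rw [e1, e2]; exact h
  have hindm : ProbabilityTheory.IndepFun ψm gm P := by
    have hf : Measurable fun t : ℝ => Set.indicator ({-1} : Set ℝ) (fun _ => (1:ℝ)) t :=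
      measurable_const.indicator (measurableSet_singleton (-1))
    have hg : Measurable fun T : (EuclideanSpace ℝ (Fin d) →L[ℝ] EuclideanSpace ℝ (Fin d)) =>
        φ (NormedSpace.exp ((-c) • T)) := (φ.continuous.comp (hexp_cont (-c))).measurable
    have h := hind.comp hf hg
    have e1 : ψm = (fun t : ℝ => Set.indicator ({-1} : Set ℝ) (fun _ => (1:ℝ)) t) ∘ θ := by
      funext ω
      simp [hψm, Set.indicator_apply, Set.mem_setOf_eq, Set.mem_singleton_iff]
    have e2 : gm = (fun T => φ (NormedSpace.exp ((-c) • T))) ∘ M := rfl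
    rw [e1, e2]; exact h
  -- expectation of indicators
  have hψp_avg : ∫ ω, ψp ω ∂P = 1 / 2 := by
    rw [hψp, integral_indicator_const (1:ℝ) hs1, measureReal_def, hθ1]
    norm_num [ENNReal.toReal_div]
  have hψm_avg : ∫ ω, ψm ω ∂P = 1 / 2 := by
    rw [hψm, integral_indicator_const (1:ℝ) hs2, measureReal_def, hθ2]
    norm_num [ENNReal.toReal_div]
  -- a.e. decomposition
  have hdecomp : ∀ᵐ ω ∂P, ⟪u, F ω u⟫ = ψp ω * gp ω + ψm ω * gm ω := by
    filter_upwards [hθae] with ω h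
    rcases h with h | h
    · have h' : ¬ (θ ω = -1) := by rw [h]; norm_num
      simp only [hψp, hψm, Set.indicator_apply, Set.mem_setOf_eq, h, h', if_true, if_false,
        one_mul, zero_mul, add_zero, hF]
      norm_num [one_smul, hgp]
    · have h' : ¬ (θ ω = 1) := by rw [h]; norm_num
      simp only [hψp, hψm, Set.indicator_apply, Set.mem_setOf_eq, h, h', if_true, if_false,
        one_mul, zero_mul, zero_add, hF]
      simp only [smul_smul]
      norm_num [hgp, hgm]
  -- integrability of products
  have hprodp_int : Integrable (fun ω => ψp ω * gp ω) P := by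
    apply hgp_int.bdd_mul hψp_meas.aestronglyMeasurable
    refine Filter.Eventually.of_forall (fun ω => (?_ : _ ≤ (1:ℝ)))
    simp only [hψp, Set.indicator_apply]
    split <;> simp
  have hprodm_int : Integrable (fun ω => ψm ω * gm ω) P := by
    apply hgm_int.bdd_mul hψm_meas.aestronglyMeasurable
    refine Filter.Eventually.of_forall (fun ω => (?_ : _ ≤ (1:ℝ)))
    simp only [hψm, Set.indicator_apply]
    split <;> simp
  -- compute the integral
  have hintF : ∫ ω, ⟪u, F ω u⟫ ∂P
      = (1 / 2) * ∫ ω, gp ω ∂P + (1 / 2) * ∫ ω, gm ω ∂P := by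
    rw [integral_congr_ae hdecomp, integral_add hprodp_int hprodm_int]
    have ep : ∫ a, ψp a * gp a ∂P = (∫ a, ψp a ∂P) * ∫ a, gp a ∂P :=
      hindp.integral_mul_eq_mul_integral hψp_int.aestronglyMeasurable hgp_int.aestronglyMeasurable
    have em : ∫ a, ψm a * gm a ∂P = (∫ a, ψm a ∂P) * ∫ a, gm a ∂P :=
      hindm.integral_mul_eq_mul_integral hψm_int.aestronglyMeasurable hgm_int.aestronglyMeasurable
    rw [ep, em, hψp_avg, hψm_avg]
  -- the key bound
  have hkey : ∫ ω, gp ω ∂P + ∫ ω, gm ω ∂P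
      ≤ 2 * Real.exp (c ^ 2 * L ^ 2 / 2) * ‖u‖ ^ 2 := by
    rw [← integral_add hgp_int hgm_int]
    calc ∫ ω, (gp ω + gm ω) ∂P
        ≤ ∫ _ω, 2 * Real.exp (c ^ 2 * L ^ 2 / 2) * ‖u‖ ^ 2 ∂P := by
          apply integral_mono_ae (hgp_int.add hgm_int) (integrable_const _)
          filter_upwards [hMb] with ω hMω
          exact sg_key (M ω) c L hMω u
      _ = 2 * Real.exp (c ^ 2 * L ^ 2 / 2) * ‖u‖ ^ 2 := by
          simp [measure_univ]
  -- conclude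
  have hfinal : ∫ ω, ⟪u, F ω u⟫ ∂P ≤ Real.exp (c ^ 2 * L ^ 2 / 2) * ‖u‖ ^ 2 := by
    rw [hintF]; nlinarith [hkey]
  have hgoal : ⟪u, (Real.exp (c ^ 2 * L ^ 2 / 2) •
        (1 : EuclideanSpace ℝ (Fin d) →L[ℝ] EuclideanSpace ℝ (Fin d)) -
      ∫ ω, F ω ∂P) u⟫
      = Real.exp (c ^ 2 * L ^ 2 / 2) * ‖u‖ ^ 2 - ∫ ω, ⟪u, F ω u⟫ ∂P := by
    rw [ContinuousLinearMap.sub_apply, inner_sub_right, ContinuousLinearMap.smul_apply,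
      ContinuousLinearMap.one_apply, real_inner_smul_right, real_inner_self_eq_norm_sq, hswap]
  rw [hgoal]
  linarith

end Main
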